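/- arXiv:1403.0948 — 2 statements merged into one kernel-verified Lean document; each statement's English description precedes it below -/
import Mathlib

section
/- For any bijection f from the edge set of the complete graph K_n (n ≥ 2) to {1, 2, ..., n(n-1)/2}, there exists a walk (allowing repeated vertices) in K_n of length at least n-1 whose consecutive edge labels under f are strictly increasing. -/
/-- Position of token `p` after processing the first `t` edges, where edge `t`
    (for `t ≥ 1`) has endpoints `u t`, `v t`: tokens at the endpoints swap. -/
private def tokPos {n : ℕ} (u v : ℕ → Fin n) : ℕ → Fin n → Fin n
  | 0 => id
  | t+1 => fun p => Equiv.swap (u (t+1)) (v (t+1)) (tokPos u v t p)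

private theorem tokPos_inj {n : ℕ} (u v : ℕ → Fin n) :
    ∀ t, Function.Injective (tokPos u v t)
  | 0 => fun _ _ h => h
  | t+1 => fun a b h => tokPos_inj u v t ((Equiv.swap _ _).injective h)

/-- For any bijection `f` from the edge set of `K_n` (`n ≥ 2`) to
`{1, ..., n(n-1)/2}`, there exists a walk (repeated vertices allowed) of length
at least `n-1` whose consecutive edge labels are strictly increasing. -/
theorem increasing_walk_of_length_n_sub_one
    (n : ℕ) (hn : 2 ≤ n) (f : Sym2 (Fin n) → ℕ)
    (hf : Set.BijOn f {e : Sym2 (Fin n) | ¬ e.IsDiag} (Set.Icc 1 (n * (n - 1) / 2))) :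
    ∃ (k : ℕ) (w : ℕ → Fin n), n - 1 ≤ k ∧
      (∀ i < k, w i ≠ w (i + 1)) ∧
      (∀ i, i + 1 < k → f s(w i, w (i + 1)) < f s(w (i + 1), w (i + 2))) := by
  classical
  haveI : Nonempty (Sym2 (Fin n)) := ⟨s(⟨0, by omega⟩, ⟨0, by omega⟩)⟩
  set m := n * (n - 1) / 2 with hm
  have hm2 : 2 * m = n * (n - 1) := by
    have hev : Even (n * (n - 1)) := by
      have := Nat.even_mul_succ_self (n - 1)
      rwa [Nat.sub_add_cancel (by omega), mul_comm] at this
    have := Nat.div_mul_cancel hev.two_dvd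
    omega
  -- enumerate edges by label
  set e : ℕ → Sym2 (Fin n) := fun t => Function.invFunOn f {a | ¬ a.IsDiag} t with he
  have hex : ∀ t, 1 ≤ t → t ≤ m → ∃ a ∈ {a : Sym2 (Fin n) | ¬ a.IsDiag}, f a = t := by
    intro t h1 h2
    obtain ⟨a, ha, hfa⟩ := hf.surjOn (Set.mem_Icc.mpr ⟨h1, h2⟩)
    exact ⟨a, ha, hfa⟩
  have he_nd : ∀ t, 1 ≤ t → t ≤ m → ¬ (e t).IsDiag :=
    fun t h1 h2 => Function.invFunOn_mem (hex t h1 h2)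
  have he_f : ∀ t, 1 ≤ t → t ≤ m → f (e t) = t :=
    fun t h1 h2 => Function.invFunOn_eq (hex t h1 h2)
  set u : ℕ → Fin n := fun t => (Quot.out (e t)).1 with hu
  set v : ℕ → Fin n := fun t => (Quot.out (e t)).2 with hv
  have huv : ∀ t, s(u t, v t) = e t := fun t => Quot.out_eq (e t)
  have hune : ∀ t, 1 ≤ t → t ≤ m → u t ≠ v t := by
    intro t h1 h2 h
    exact he_nd t h1 h2 (by rw [← huv t]; exact Sym2.mk_isDiag_iff.mpr h)
  set P : ℕ → Fin n → Fin n := tokPos u v with hP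
  -- the set of move times (0-indexed) of token p
  set mov : Fin n → Finset ℕ := fun p =>
    (Finset.range m).filter (fun t => P t p = u (t+1) ∨ P t p = v (t+1)) with hmov
  -- exactly two tokens move at each step
  have hcard2 : ∀ t, t < m →
      (Finset.univ.filter (fun p : Fin n => P t p = u (t+1) ∨ P t p = v (t+1))).card = 2 := by
    intro t ht
    have hinj := tokPos_inj u v t
    have hsurj : Function.Surjective (P t) := Finite.injective_iff_surjective.mp hinj
    obtain ⟨pu, hpu⟩ := hsurj (u (t+1))
    obtain ⟨pv, hpv⟩ := hsurj (v (t+1))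
    have hne : u (t+1) ≠ v (t+1) := hune (t+1) (by omega) (by omega)
    have hpne : pu ≠ pv := by
      intro h; exact hne (by rw [← hpu, ← hpv, h])
    have hfe : (Finset.univ.filter (fun p : Fin n => P t p = u (t+1) ∨ P t p = v (t+1)))
        = {pu, pv} := by
      ext q
      simp only [Finset.mem_filter, Finset.mem_univ, true_and, Finset.mem_insert,
        Finset.mem_singleton]
      constructor
      · rintro (h | h)
        · exact Or.inl (hinj (h.trans hpu.symm))
        · exact Or.inr (hinj (h.trans hpv.symm))
      · rintro (rfl | rfl)
        · exact Or.inl hpu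
        · exact Or.inr hpv
    rw [hfe, Finset.card_insert_of_notMem (by simpa using hpne), Finset.card_singleton]
  -- total number of moves is 2m
  have hsum : ∑ p : Fin n, (mov p).card = 2 * m := by
    have h1 : ∀ p : Fin n, (mov p).card =
        ∑ t ∈ Finset.range m, if (P t p = u (t+1) ∨ P t p = v (t+1)) then 1 else 0 :=
      fun p => Finset.card_filter _ _
    calc ∑ p : Fin n, (mov p).card
        = ∑ p : Fin n, ∑ t ∈ Finset.range m,
            if (P t p = u (t+1) ∨ P t p = v (t+1)) then 1 else 0 :=
          Finset.sum_congr rfl (fun p _ => h1 p)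
      _ = ∑ t ∈ Finset.range m, ∑ p : Fin n,
            if (P t p = u (t+1) ∨ P t p = v (t+1)) then 1 else 0 := Finset.sum_comm
      _ = ∑ t ∈ Finset.range m, 2 := by
          refine Finset.sum_congr rfl (fun t ht => ?_)
          rw [← Finset.card_filter]
          exact hcard2 t (Finset.mem_range.mp ht)
      _ = 2 * m := by simp [mul_comm]
  -- some token moves at least n-1 times
  have hpig : ∃ p : Fin n, n - 1 ≤ (mov p).card := by
    by_contra h
    push_neg at h
    have hb : ∀ p ∈ (Finset.univ : Finset (Fin n)), (mov p).card ≤ n - 2 := by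
      intro p _; have := h p; omega
    have := Finset.sum_le_card_nsmul Finset.univ (fun p => (mov p).card) (n - 2) hb
    rw [hsum, Finset.card_univ, Fintype.card_fin, smul_eq_mul] at this
    rw [hm2] at this
    have hlt : n * (n - 2) < n * (n - 1) :=
      Nat.mul_lt_mul_of_pos_left (by omega) (by omega)
    omega
  obtain ⟨p, hk⟩ := hpig
  set k := (mov p).card with hkdef
  -- enumerate the move times in increasing order
  set φ := (mov p).orderIsoOfFin rfl with hφ
  set T : ℕ → ℕ := fun i => if h : i < k then (φ ⟨i, h⟩ : ℕ) else 0 with hT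
  have hTmem : ∀ i, i < k → T i ∈ mov p := by
    intro i hi
    simp only [hT, dif_pos hi]
    exact (φ ⟨i, hi⟩).2
  have hTmono : ∀ i j, i < j → j < k → T i < T j := by
    intro i j hij hj
    have hi : i < k := lt_trans hij hj
    simp only [hT, dif_pos hi, dif_pos hj]
    exact φ.strictMono (by exact hij)
  have hTsurj : ∀ t, t ∈ mov p → ∃ i, ∃ h : i < k, T i = t := by
    intro t ht
    obtain ⟨a, ha⟩ := φ.surjective ⟨t, ht⟩
    exact ⟨a.1, a.2, by simp [hT, dif_pos a.2, ha]; intro h; have := a.2; omega⟩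
  -- move times are < m
  have hTlt : ∀ i, i < k → T i < m := by
    intro i hi
    have := hTmem i hi
    rw [hmov] at this
    exact Finset.mem_range.mp (Finset.mem_filter.mp this).1
  -- the move condition at T i
  have hTmove : ∀ i, i < k → (P (T i) p = u (T i + 1) ∨ P (T i) p = v (T i + 1)) := by
    intro i hi
    have := hTmem i hi
    rw [hmov] at this
    exact (Finset.mem_filter.mp this).2
  -- stability: no move during [s, s') keeps the position
  have hstable : ∀ s' s, s ≤ s' →
      (∀ t, s ≤ t → t < s' → ¬ (P t p = u (t+1) ∨ P t p = v (t+1))) →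
      P s' p = P s p := by
    intro s'
    induction s' with
    | zero =>
      intro s hs _
      have hs0 : s = 0 := by omega
      rw [hs0]
    | succ s' ih =>
      intro s hs hno
      rcases Nat.eq_or_lt_of_le hs with h | h
      · rw [h]
      · have hs' : s ≤ s' := by omega
        have hstep : P (s' + 1) p = P s' p := by
          show Equiv.swap (u (s'+1)) (v (s'+1)) (P s' p) = P s' p
          have := hno s' hs' (by omega)
          push_neg at this
          exact Equiv.swap_apply_of_ne_of_ne this.1 this.2
        rw [hstep]
        exact ih s hs' (fun t h1 h2 => hno t h1 (by omega))
  -- between consecutive move times there are no moves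
  have hno_between : ∀ i, i < k → ∀ t, T i + 1 ≤ t → (∀ j, j < k → t ≠ T j) → t < m →
      ¬ (P t p = u (t+1) ∨ P t p = v (t+1)) := by
    intro i hi t _ hne htm hcond
    have htmov : t ∈ mov p := by
      rw [hmov]; exact Finset.mem_filter.mpr ⟨Finset.mem_range.mpr htm, hcond⟩
    obtain ⟨j, hj, hTj⟩ := hTsurj t htmov
    exact hne j hj hTj.symm
  -- the walk
  set w : ℕ → Fin n := fun i => if i = 0 then p else P (T (i-1) + 1) p with hw
  have hkey : ∀ i, i < k → P (T i) p = w i := by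
    intro i
    induction i with
    | zero =>
      intro h0
      have : P (T 0) p = P 0 p := by
        apply hstable (T 0) 0 (Nat.zero_le _)
        intro t _ ht hcond
        have htmov : t ∈ mov p := by
          rw [hmov]
          refine Finset.mem_filter.mpr ⟨Finset.mem_range.mpr ?_, hcond⟩
          have := hTlt 0 h0; omega
        obtain ⟨j, hj, hTj⟩ := hTsurj t htmov
        have : T 0 ≤ T j := by
          rcases Nat.eq_zero_or_pos j with rfl | hjpos
          · exact le_refl _
          · exact le_of_lt (hTmono 0 j hjpos hj)
        omega
      rw [this, hw]
      simp [hP, tokPos]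
    | succ i ih =>
      intro hi1
      have hi : i < k := by omega
      have hmono : T i + 1 ≤ T (i+1) := hTmono i (i+1) (by omega) hi1
      have : P (T (i+1)) p = P (T i + 1) p := by
        apply hstable (T (i+1)) (T i + 1) hmono
        intro t h1 h2 hcond
        have htm : t < m := lt_trans h2 (hTlt (i+1) hi1)
        have htmov : t ∈ mov p := by
          rw [hmov]; exact Finset.mem_filter.mpr ⟨Finset.mem_range.mpr htm, hcond⟩
        obtain ⟨j, hj, hTj⟩ := hTsurj t htmov
        subst hTj
        rcases Nat.lt_or_ge j (i+1) with hji | hji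
        · rcases Nat.eq_or_lt_of_le (Nat.lt_succ_iff.mp hji) with rfl | hlt
          · omega
          · have := hTmono j i hlt hi; omega
        · rcases Nat.eq_or_lt_of_le hji with h' | h'
          · rw [← h'] at h2; omega
          · have := hTmono (i+1) j h' hj; omega
      rw [this, hw]
      simp
  -- at a move time, the token crosses the edge e (T i + 1)
  have hcross : ∀ i, i < k →
      P (T i + 1) p ≠ P (T i) p ∧ s(P (T i) p, P (T i + 1) p) = e (T i + 1) := by
    intro i hi
    have hne : u (T i + 1) ≠ v (T i + 1) := by
      have := hTlt i hi
      exact hune (T i + 1) (by omega) (by omega)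
    have hstep : P (T i + 1) p = Equiv.swap (u (T i + 1)) (v (T i + 1)) (P (T i) p) := rfl
    rcases hTmove i hi with h | h
    · rw [hstep, h, Equiv.swap_apply_left]
      exact ⟨hne.symm, huv _⟩
    · rw [hstep, h, Equiv.swap_apply_right]
      refine ⟨hne, ?_⟩
      rw [Sym2.eq_swap]; exact huv _
  -- labels along the walk
  have hlabel : ∀ i, i < k → f s(w i, w (i+1)) = T i + 1 := by
    intro i hi
    have hw1 : w (i+1) = P (T i + 1) p := by rw [hw]; simp
    rw [← hkey i hi, hw1, (hcross i hi).2]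
    have := hTlt i hi
    exact he_f (T i + 1) (by omega) (by omega)
  refine ⟨k, w, le_trans hk (le_refl _), ?_, ?_⟩
  · intro i hi
    have hw1 : w (i+1) = P (T i + 1) p := by rw [hw]; simp
    rw [← hkey i hi, hw1]
    exact fun h => (hcross i hi).1 h.symm
  · intro i hi
    rw [hlabel i (by omega), hlabel (i+1) hi]
    have := hTmono i (i+1) (by omega) hi
    omega
end

section
/- Let L_k be the length of the longest cycle of a uniformly random permutation of {1,...,k}, and define α_k = E[1/L_k + 1/(L_k+1) + ... + 1/k]. Then α_{k+1} ≤ α_k for all k ≥ 1. -/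
open scoped Classical

/-- The length of the longest cycle of a permutation (fixed points count as
cycles of length 1). -/
noncomputable def longestCycle {α : Type*} [Fintype α] (π : Equiv.Perm α) : ℕ :=
  Finset.univ.sup fun x => (Finset.univ.filter fun y => π.SameCycle x y).card

/-- `α_k = E[1/L_k + 1/(L_k+1) + ⋯ + 1/k]` where `L_k` is the longest cycle length
of a uniformly random permutation of `{1, ..., k}`. -/
noncomputable def alphaConst (k : ℕ) : ℝ :=
  (∑ π : Equiv.Perm (Fin k), ∑ i ∈ Finset.Icc (longestCycle π) k, (1 : ℝ) / i) /
    (Nat.factorial k : ℝ)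

namespace AlphaAux

open Equiv Equiv.Perm Finset

variable {α : Type*} [Fintype α]

/-- The length of the cycle containing `x`. -/
noncomputable def clen (π : Perm α) (x : α) : ℕ :=
  (Finset.univ.filter fun y => π.SameCycle x y).card

lemma mem_clenSet_iff (π : Perm α) (x y : α) :
    y ∈ (Finset.univ.filter fun z => π.SameCycle x z) ↔ π.SameCycle x y := by
  rw [Finset.mem_filter]
  simp only [Finset.mem_univ, true_and]

lemma clen_eq_card (π : Perm α) (x : α) :
    clen π x = (Finset.univ.filter fun z => π.SameCycle x z).card := rfl

lemma longestCycle_eq_sup (π : Perm α) : longestCycle π = Finset.univ.sup (clen π) := rfl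

lemma one_le_clen (π : Perm α) (x : α) : 1 ≤ clen π x :=
  Finset.card_pos.mpr ⟨x, Finset.mem_filter.mpr ⟨mem_univ x, SameCycle.refl π x⟩⟩

lemma clen_le_longest (π : Perm α) (x : α) : clen π x ≤ longestCycle π :=
  Finset.le_sup (mem_univ x)

lemma longestCycle_le_card (π : Perm α) : longestCycle π ≤ Fintype.card α := by
  rw [longestCycle_eq_sup]
  exact Finset.sup_le fun x _ => Finset.card_le_univ _

lemma clen_congr {π : Perm α} {x y : α} (h : π.SameCycle x y) : clen π x = clen π y := by
  unfold clen
  congr 1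
  apply Finset.filter_congr
  intro b _
  exact ⟨fun hb => h.symm.trans hb, fun hb => h.trans hb⟩

lemma sameCycle_fixed {π : Perm α} {x : α} (h : π x = x) {y : α} :
    π.SameCycle x y ↔ y = x := by
  constructor
  · rintro ⟨n, rfl⟩
    exact Equiv.Perm.zpow_apply_eq_self_of_apply_eq_self h n
  · rintro rfl
    exact SameCycle.refl _ _

lemma sameCycle_of_pow {π : Perm α} {x y : α} {n : ℕ} (h : (π ^ n) x = y) :
    π.SameCycle x y := ⟨(n : ℤ), by rw [zpow_natCast]; exact h⟩


lemma card_eq_one_of {β : Type*} (s : Finset β) (a : β) (h : ∀ b, b ∈ s ↔ b = a) :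
    s.card = 1 := by
  have : s = {a} := by
    ext b
    rw [Finset.mem_singleton]
    exact h b
  rw [this, Finset.card_singleton]

/-- Embedding `Fin k ↪ Fin (k+1)` by `succ`. -/
def succEmb (k : ℕ) : Fin k ↪ Fin (k + 1) := ⟨Fin.succ, Fin.succ_injective k⟩

lemma eq_map_succ {k : ℕ} (s : Finset (Fin (k + 1))) (t : Finset (Fin k))
    (h0 : (0 : Fin (k + 1)) ∉ s) (hs : ∀ i : Fin k, i.succ ∈ s ↔ i ∈ t) :
    s = t.map (succEmb k) := by
  ext b
  simp only [Finset.mem_map, succEmb, Function.Embedding.coeFn_mk]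
  refine Fin.cases ?_ ?_ b
  · constructor
    · exact fun h => absurd h h0
    · rintro ⟨a, _, ha⟩
      exact absurd ha (Fin.succ_ne_zero a)
  · intro i
    rw [hs i]
    constructor
    · exact fun h => ⟨i, h, rfl⟩
    · rintro ⟨a, ha, hai⟩
      rwa [← Fin.succ_injective k hai]

lemma card_succ_of_not {k : ℕ} (s : Finset (Fin (k + 1))) (t : Finset (Fin k))
    (h0 : (0 : Fin (k + 1)) ∉ s) (hs : ∀ i : Fin k, i.succ ∈ s ↔ i ∈ t) :
    s.card = t.card := by
  rw [eq_map_succ s t h0 hs, Finset.card_map]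

lemma card_succ_of_mem {k : ℕ} (s : Finset (Fin (k + 1))) (t : Finset (Fin k))
    (h0 : (0 : Fin (k + 1)) ∈ s) (hs : ∀ i : Fin k, i.succ ∈ s ↔ i ∈ t) :
    s.card = t.card + 1 := by
  have h2 : s.erase 0 = t.map (succEmb k) := by
    apply eq_map_succ
    · simp
    · intro i
      rw [Finset.mem_erase]
      simp only [ne_eq, Fin.succ_ne_zero i, not_false_eq_true, true_and]
      exact hs i
  calc s.card = (s.erase 0).card + 1 := by
        rw [Finset.card_erase_of_mem h0]
        have : 1 ≤ s.card := Finset.card_pos.mpr ⟨0, h0⟩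
        omega
    _ = t.card + 1 := by rw [h2, Finset.card_map]

section insertion

variable {k : ℕ} (σ : Perm (Fin k))

/-- Projection map: `0 ↦ j`, `i.succ ↦ i`. -/
def proj (j : Fin k) : Fin (k + 1) → Fin k := fun a => Fin.cases j (fun i => i) a

@[simp] lemma proj_zero (j : Fin k) : proj j 0 = j := rfl
@[simp] lemma proj_succ (j : Fin k) (i : Fin k) : proj j i.succ = i := rfl

/-! ### Case `p = 0` : insert a new fixed point -/

lemma tau0_zero : Equiv.Perm.decomposeFin.symm ((0 : Fin (k + 1)), σ) 0 = 0 :=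
  Equiv.Perm.decomposeFin_symm_apply_zero 0 σ

lemma tau0_succ (i : Fin k) :
    Equiv.Perm.decomposeFin.symm ((0 : Fin (k + 1)), σ) i.succ = (σ i).succ := by
  rw [Equiv.Perm.decomposeFin_symm_apply_succ, Equiv.swap_self]
  rfl

lemma tau0_pow_succ (n : ℕ) (i : Fin k) :
    (Equiv.Perm.decomposeFin.symm ((0 : Fin (k + 1)), σ) ^ n) i.succ = ((σ ^ n) i).succ := by
  induction n with
  | zero => simp
  | succ n ih =>
      rw [pow_succ', Equiv.Perm.mul_apply, ih, tau0_succ, pow_succ', Equiv.Perm.mul_apply]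

lemma tau0_sameCycle_succ (i l : Fin k) :
    (Equiv.Perm.decomposeFin.symm ((0 : Fin (k + 1)), σ)).SameCycle i.succ l.succ ↔
      σ.SameCycle i l := by
  constructor
  · intro h
    obtain ⟨n, _, hn⟩ := h.exists_pow_eq'
    rw [tau0_pow_succ] at hn
    exact sameCycle_of_pow (Fin.succ_injective _ hn)
  · intro h
    obtain ⟨n, _, hn⟩ := h.exists_pow_eq'
    exact sameCycle_of_pow (by rw [tau0_pow_succ, hn])

lemma tau0_clen_zero :
    clen (Equiv.Perm.decomposeFin.symm ((0 : Fin (k + 1)), σ)) 0 = 1 := by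
  apply card_eq_one_of _ (0 : Fin (k + 1))
  intro b
  rw [mem_clenSet_iff]
  exact sameCycle_fixed (tau0_zero σ)

lemma tau0_clen_succ (i : Fin k) :
    clen (Equiv.Perm.decomposeFin.symm ((0 : Fin (k + 1)), σ)) i.succ = clen σ i := by
  have h0 : ¬ (Equiv.Perm.decomposeFin.symm ((0 : Fin (k + 1)), σ)).SameCycle i.succ 0 := by
    intro h
    have := (sameCycle_fixed (tau0_zero σ)).mp h.symm
    exact (Fin.succ_ne_zero i) this
  apply card_succ_of_not
  · intro hmem
    exact h0 ((mem_clenSet_iff _ _ _).mp hmem)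
  · intro l
    rw [mem_clenSet_iff, mem_clenSet_iff]
    exact tau0_sameCycle_succ σ i l

lemma tau0_longest (hk : 0 < k) :
    longestCycle (Equiv.Perm.decomposeFin.symm ((0 : Fin (k + 1)), σ)) = longestCycle σ := by
  have : Nonempty (Fin k) := ⟨⟨0, hk⟩⟩
  apply le_antisymm
  · rw [longestCycle_eq_sup]
    apply Finset.sup_le
    intro a _
    refine Fin.cases ?_ ?_ a
    · rw [tau0_clen_zero]
      exact le_trans (one_le_clen σ (Classical.arbitrary _)) (clen_le_longest σ _)
    · intro i
      rw [tau0_clen_succ]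
      exact clen_le_longest σ i
  · rw [longestCycle_eq_sup, longestCycle_eq_sup]
    apply Finset.sup_le
    intro i _
    rw [← tau0_clen_succ σ i]
    exact Finset.le_sup (mem_univ _)

/-! ### Case `p = j.succ` : insert into the cycle of `j` -/

lemma taus_zero (j : Fin k) :
    Equiv.Perm.decomposeFin.symm (j.succ, σ) 0 = j.succ :=
  Equiv.Perm.decomposeFin_symm_apply_zero _ σ

lemma taus_succ (j i : Fin k) :
    Equiv.Perm.decomposeFin.symm (j.succ, σ) i.succ =
      if σ i = j then 0 else (σ i).succ := by
  rw [Equiv.Perm.decomposeFin_symm_apply_succ]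
  by_cases h : σ i = j
  · rw [h, Equiv.swap_apply_right, if_pos rfl]
  · rw [if_neg h, Equiv.swap_apply_of_ne_of_ne (Fin.succ_ne_zero _)
      (fun hc => h (Fin.succ_injective _ hc))]

/-- One step of the forward direction. -/
lemma taus_proj_step (j : Fin k) (a : Fin (k + 1)) :
    σ.SameCycle (proj j a) (proj j (Equiv.Perm.decomposeFin.symm (j.succ, σ) a)) := by
  refine Fin.cases ?_ ?_ a
  · simp only [taus_zero, proj_zero, proj_succ]
    exact SameCycle.refl σ j
  · intro i
    simp only [taus_succ, proj_succ]
    by_cases h : σ i = j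
    · simp only [if_pos h, proj_zero, ← h]
      exact Equiv.Perm.sameCycle_apply_right.mpr (SameCycle.refl σ i)
    · simp only [if_neg h, proj_succ]
      exact Equiv.Perm.sameCycle_apply_right.mpr (SameCycle.refl σ i)

lemma taus_sameCycle_forward (j : Fin k) {a b : Fin (k + 1)}
    (h : (Equiv.Perm.decomposeFin.symm (j.succ, σ)).SameCycle a b) :
    σ.SameCycle (proj j a) (proj j b) := by
  obtain ⟨n, hlt, hn⟩ := h.exists_pow_eq'
  clear hlt h
  subst hn
  induction n with
  | zero => exact SameCycle.refl σ _
  | succ n ih =>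
      rw [pow_succ', Equiv.Perm.mul_apply]
      exact ih.trans (taus_proj_step σ j _)

/-- `x.succ` and `(σ x).succ` are in the same cycle of the inserted permutation. -/
lemma taus_succ_step (j x : Fin k) :
    (Equiv.Perm.decomposeFin.symm (j.succ, σ)).SameCycle x.succ (σ x).succ := by
  set τ := Equiv.Perm.decomposeFin.symm (j.succ, σ)
  by_cases h : σ x = j
  · have h1 : τ x.succ = 0 := by rw [taus_succ, if_pos h]
    have h2 : τ 0 = (σ x).succ := by rw [taus_zero, h]
    have : (τ ^ (2 : ℕ)) x.succ = (σ x).succ := by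
      rw [pow_succ, pow_one, Equiv.Perm.mul_apply, h1, h2]
    exact sameCycle_of_pow this
  · have h1 : τ x.succ = (σ x).succ := by rw [taus_succ, if_neg h]
    exact sameCycle_of_pow (n := 1) (by rw [pow_one, h1])

lemma taus_sameCycle_backward_succ (j : Fin k) {x y : Fin k} (h : σ.SameCycle x y) :
    (Equiv.Perm.decomposeFin.symm (j.succ, σ)).SameCycle x.succ y.succ := by
  obtain ⟨n, hlt, hn⟩ := h.exists_pow_eq'
  clear hlt h
  subst hn
  induction n with
  | zero => exact SameCycle.refl _ _
  | succ n ih =>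
      rw [pow_succ', Equiv.Perm.mul_apply]
      exact ih.trans (taus_succ_step σ j _)

lemma taus_sameCycle_base (j : Fin k) (a : Fin (k + 1)) :
    (Equiv.Perm.decomposeFin.symm (j.succ, σ)).SameCycle a (proj j a).succ := by
  refine Fin.cases ?_ ?_ a
  · rw [proj_zero]
    exact sameCycle_of_pow (n := 1) (by rw [pow_one, taus_zero])
  · intro i
    simp only [proj_succ]
    exact SameCycle.refl _ _

/-- The key structural lemma: cycles of the inserted permutation correspond to
cycles of `σ` under the projection `proj j`. -/
lemma taus_sameCycle_iff (j : Fin k) (a b : Fin (k + 1)) :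
    (Equiv.Perm.decomposeFin.symm (j.succ, σ)).SameCycle a b ↔
      σ.SameCycle (proj j a) (proj j b) := by
  constructor
  · exact taus_sameCycle_forward σ j
  · intro h
    exact ((taus_sameCycle_base σ j a).trans
      (taus_sameCycle_backward_succ σ j h)).trans (taus_sameCycle_base σ j b).symm

lemma taus_clen (j : Fin k) (a : Fin (k + 1)) :
    clen (Equiv.Perm.decomposeFin.symm (j.succ, σ)) a =
      clen σ (proj j a) + (if σ.SameCycle (proj j a) j then 1 else 0) := by
  have hPs : ∀ l : Fin k,
      (Equiv.Perm.decomposeFin.symm (j.succ, σ)).SameCycle a l.succ ↔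
        σ.SameCycle (proj j a) l := by
    intro l
    rw [taus_sameCycle_iff, proj_succ]
  by_cases hs : σ.SameCycle (proj j a) j
  · rw [if_pos hs]
    have hP0 : (Equiv.Perm.decomposeFin.symm (j.succ, σ)).SameCycle a 0 := by
      rw [taus_sameCycle_iff, proj_zero]
      exact hs
    apply card_succ_of_mem
    · exact (mem_clenSet_iff _ _ _).mpr hP0
    · intro l
      rw [mem_clenSet_iff, mem_clenSet_iff]
      exact hPs l
  · rw [if_neg hs, add_zero]
    have hP0 : ¬ (Equiv.Perm.decomposeFin.symm (j.succ, σ)).SameCycle a 0 := by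
      rw [taus_sameCycle_iff, proj_zero]
      exact hs
    apply card_succ_of_not
    · intro hmem
      exact hP0 ((mem_clenSet_iff _ _ _).mp hmem)
    · intro l
      rw [mem_clenSet_iff, mem_clenSet_iff]
      exact hPs l

lemma taus_longest (hk : 0 < k) (j : Fin k) :
    longestCycle (Equiv.Perm.decomposeFin.symm (j.succ, σ)) =
      if clen σ j = longestCycle σ then longestCycle σ + 1 else longestCycle σ := by
  have : Nonempty (Fin k) := ⟨⟨0, hk⟩⟩
  set L := longestCycle σ with hL
  set c := clen σ j with hc
  apply le_antisymm
  · rw [longestCycle_eq_sup]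
    apply Finset.sup_le
    intro a _
    rw [taus_clen]
    by_cases hs : σ.SameCycle (proj j a) j
    · rw [if_pos hs, clen_congr hs, ← hc]
      by_cases hcL : c = L
      · rw [if_pos hcL, hcL]
      · rw [if_neg hcL]
        have : c < L := lt_of_le_of_ne (clen_le_longest σ j) hcL
        omega
    · rw [if_neg hs, add_zero]
      split <;> [exact le_trans (clen_le_longest σ _) (Nat.le_succ _);
        exact clen_le_longest σ _]
  · by_cases hcL : c = L
    · rw [if_pos hcL]
      have h0 : clen (Equiv.Perm.decomposeFin.symm (j.succ, σ)) 0 = c + 1 := by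
        rw [taus_clen, proj_zero, if_pos (SameCycle.refl σ j)]
      rw [longestCycle_eq_sup, ← hcL, ← h0]
      exact Finset.le_sup (mem_univ 0)
    · rw [if_neg hcL]
      obtain ⟨x, _, hx⟩ := Finset.exists_mem_eq_sup Finset.univ univ_nonempty (clen σ)
      have hx' : clen σ x = L := hx.symm
      have hns : ¬ σ.SameCycle x j := fun hs => hcL (by rw [hc, ← clen_congr hs, hx'])
      have hxs : clen (Equiv.Perm.decomposeFin.symm (j.succ, σ)) x.succ = L := by
        rw [taus_clen, proj_succ, if_neg hns, add_zero, hx']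
      rw [longestCycle_eq_sup, ← hxs]
      exact Finset.le_sup (mem_univ x.succ)

/-- At least `longestCycle σ` elements lie in cycles of maximal length. -/
lemma card_crit (hk : 0 < k) :
    longestCycle σ ≤ (Finset.univ.filter fun j => clen σ j = longestCycle σ).card := by
  have : Nonempty (Fin k) := ⟨⟨0, hk⟩⟩
  obtain ⟨x, _, hx⟩ := Finset.exists_mem_eq_sup Finset.univ univ_nonempty (clen σ)
  have hx' : clen σ x = longestCycle σ := hx.symm
  calc longestCycle σ = clen σ x := hx
    _ ≤ _ := by
        rw [clen_eq_card]
        apply Finset.card_le_card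
        intro y hy
        have hsc : σ.SameCycle x y := (mem_clenSet_iff σ x y).mp hy
        exact Finset.mem_filter.mpr ⟨Finset.mem_univ y, by rw [← clen_congr hsc, hx']⟩

end insertion

end AlphaAux

open AlphaAux Equiv Equiv.Perm Finset in
/-- `α_{k+1} ≤ α_k` for all `k ≥ 1`. -/
theorem alpha_monotone (k : ℕ) (hk : 1 ≤ k) : alphaConst (k + 1) ≤ alphaConst k := by
  have hk0 : 0 < k := hk
  have hne : Nonempty (Fin k) := ⟨⟨0, hk0⟩⟩
  -- abbreviations
  set A : Equiv.Perm (Fin k) → ℝ :=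
    fun σ => ∑ i ∈ Finset.Icc (longestCycle σ) k, (1 : ℝ) / i with hA
  set A' : Equiv.Perm (Fin (k + 1)) → ℝ :=
    fun π => ∑ i ∈ Finset.Icc (longestCycle π) (k + 1), (1 : ℝ) / i with hA'
  -- basic bounds on L
  have hL1 : ∀ σ : Equiv.Perm (Fin k), 1 ≤ longestCycle σ := fun σ =>
    le_trans (one_le_clen σ (Classical.arbitrary _)) (clen_le_longest σ _)
  have hLk : ∀ σ : Equiv.Perm (Fin k), longestCycle σ ≤ k := fun σ => by
    have := longestCycle_le_card σ
    rwa [Fintype.card_fin] at this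
  -- key inequality: for each σ, the sum of A' over all insertions is ≤ (k+1) * A σ
  have key : ∀ σ : Equiv.Perm (Fin k),
      ∑ p : Fin (k + 1), A' (Equiv.Perm.decomposeFin.symm (p, σ)) ≤ (k + 1) * A σ := by
    intro σ
    set L := longestCycle σ with hLdef
    have hL1' : 1 ≤ L := hL1 σ
    have hLk' : L ≤ k := hLk σ
    have hLpos : (0 : ℝ) < L := by exact_mod_cast hL1'
    -- value of A' when longest cycle stays L
    have hstay : ∑ i ∈ Finset.Icc L (k + 1), (1 : ℝ) / i = A σ + 1 / (k + 1) := by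
      rw [hA]
      rw [Finset.sum_Icc_succ_top (by omega)]
      push_cast
      ring
    -- value of A' when longest cycle becomes L + 1
    have hgrow : ∑ i ∈ Finset.Icc (L + 1) (k + 1), (1 : ℝ) / i
        = A σ + 1 / (k + 1) - 1 / L := by
      have hins : Finset.Icc L (k + 1) = (Finset.Ioc L (k + 1)).cons L Finset.left_notMem_Ioc :=
        Finset.Icc_eq_cons_Ioc (by omega)
      have : ∑ i ∈ Finset.Icc L (k + 1), (1 : ℝ) / i
          = 1 / L + ∑ i ∈ Finset.Ioc L (k + 1), (1 : ℝ) / i := by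
        rw [hins, Finset.sum_cons]
      rw [← Finset.Icc_add_one_left_eq_Ioc] at this
      rw [hstay] at this
      have := this.symm
      linarith [this]
    -- compute the sum over p via Fin.sum_univ_succ
    rw [Fin.sum_univ_succ]
    have h0 : A' (Equiv.Perm.decomposeFin.symm ((0 : Fin (k + 1)), σ)) = A σ + 1 / (k + 1) := by
      rw [hA']
      simp only
      rw [tau0_longest σ hk0, ← hLdef, hstay]
    have hj : ∀ j : Fin k, A' (Equiv.Perm.decomposeFin.symm (j.succ, σ))
        = A σ + 1 / (k + 1) - (if clen σ j = L then 1 / (L : ℝ) else 0) := by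
      intro j
      rw [hA']
      simp only
      rw [taus_longest σ hk0 j, ← hLdef]
      by_cases hc : clen σ j = L
      · rw [if_pos hc, if_pos hc, hgrow]
      · rw [if_neg hc, if_neg hc, hstay]
        ring
    rw [h0]
    rw [Finset.sum_congr rfl (fun j _ => hj j)]
    rw [Finset.sum_sub_distrib]
    have hcount : (L : ℝ) * (1 / L) ≤
        ∑ j : Fin k, (if clen σ j = L then 1 / (L : ℝ) else 0) := by
      rw [← Finset.sum_filter, Finset.sum_const, nsmul_eq_mul]
      have hcard : (L : ℝ) ≤ ((Finset.univ.filter fun j => clen σ j = L).card : ℝ) := by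
        exact_mod_cast card_crit σ hk0
      exact mul_le_mul_of_nonneg_right hcard (by positivity)
    have hLmul : (L : ℝ) * (1 / L) = 1 := by
      field_simp
    rw [Finset.sum_const, Finset.card_univ, Fintype.card_fin, nsmul_eq_mul]
    have : (k : ℝ) * (A σ + 1 / (k + 1))
        - ∑ j : Fin k, (if clen σ j = L then 1 / (L : ℝ) else 0)
        ≤ (k : ℝ) * (A σ + 1 / (k + 1)) - 1 := by
      have := hcount
      rw [hLmul] at this
      linarith
    have hfinal : (A σ + 1 / (k + 1)) + ((k : ℝ) * (A σ + 1 / (k + 1)) - 1)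
        = (k + 1) * A σ := by
      have hk1 : (k : ℝ) + 1 ≠ 0 := by positivity
      field_simp
      ring
    linarith
  -- sum over all permutations of Fin (k+1)
  have hsum : ∑ π : Equiv.Perm (Fin (k + 1)), A' π
      ≤ (k + 1) * ∑ σ : Equiv.Perm (Fin k), A σ := by
    rw [← Equiv.sum_comp Equiv.Perm.decomposeFin.symm A']
    rw [Fintype.sum_prod_type_right]
    rw [Finset.mul_sum]
    exact Finset.sum_le_sum fun σ _ => key σ
  -- conclude
  unfold alphaConst
  rw [← hA, ← hA']
  have hfact : (Nat.factorial (k + 1) : ℝ) = (k + 1) * Nat.factorial k := by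
    rw [Nat.factorial_succ]
    push_cast
    ring
  rw [hfact]
  have hfpos : (0 : ℝ) < Nat.factorial k := by exact_mod_cast Nat.factorial_pos k
  have hk1 : (0 : ℝ) < (k : ℝ) + 1 := by positivity
  rw [div_le_div_iff₀ (by positivity) hfpos]
  calc (∑ π : Equiv.Perm (Fin (k + 1)), A' π) * (Nat.factorial k : ℝ)
      ≤ ((k + 1) * ∑ σ : Equiv.Perm (Fin k), A σ) * (Nat.factorial k : ℝ) := by
        apply mul_le_mul_of_nonneg_right hsum (le_of_lt hfpos)
    _ = (∑ σ : Equiv.Perm (Fin k), A σ) * ((k + 1) * Nat.factorial k) := by ring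
end
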